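/- arXiv:2410.03669 — 5 statements merged into one kernel-verified Lean document; each statement's English description precedes it below -/
import Mathlib

section
/- For T₁ = [[z₁,0],[0,0]] and T₂ = [[0,0],[z₂,0]] with z₁, z₂ nonzero complex numbers, the joint q-numerical range JtW_q(T₁,T₂) ⊆ ℂ² is not convex, for any q with |q| ≤ 1. -/
open scoped InnerProductSpace

variable {H : Type*} [NormedAddCommGroup H] [InnerProductSpace ℂ H]

/-- The joint `q`-numerical range of a `d`-tuple of bounded operators:
`{(⟨T₁x,y⟩,…,⟨T_dx,y⟩) : ‖x‖ = ‖y‖ = 1, ⟨x,y⟩ = q}` (with `⟨x,y⟩` linear in `x`). -/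
def JtW {d : ℕ} (q : ℂ) (T : Fin d → H →L[ℂ] H) : Set (Fin d → ℂ) :=
  {z | ∃ x y : H, ‖x‖ = 1 ∧ ‖y‖ = 1 ∧ ⟪y, x⟫_ℂ = q ∧ z = fun i => ⟪y, (T i) x⟫_ℂ}


noncomputable def vec2 (a b : ℂ) : EuclideanSpace ℂ (Fin 2) :=
  (WithLp.equiv 2 (Fin 2 → ℂ)).symm ![a, b]

lemma vec2_zero (a b : ℂ) : vec2 a b 0 = a := rfl
lemma vec2_one (a b : ℂ) : vec2 a b 1 = b := rfl

lemma norm_vec2 (a b : ℂ) (h : ‖a‖ ^ 2 + ‖b‖ ^ 2 = 1) :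
    ‖vec2 a b‖ = 1 := by
  rw [EuclideanSpace.norm_eq, Fin.sum_univ_two]
  simp only [vec2_zero, vec2_one, h, Real.sqrt_one]

lemma inner_vec2 (a b c d : ℂ) :
    ⟪vec2 c d, vec2 a b⟫_ℂ = starRingEnd ℂ c * a + starRingEnd ℂ d * b := by
  simp [PiLp.inner_apply, Fin.sum_univ_two, vec2, mul_comm]

lemma coords_of_norm_one (x : EuclideanSpace ℂ (Fin 2)) (hx : ‖x‖ = 1) :
    ‖x 0‖ ^ 2 + ‖x 1‖ ^ 2 = 1 := by
  have h := EuclideanSpace.norm_eq x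
  rw [hx, Fin.sum_univ_two] at h
  have h2 := congrArg (· ^ 2) h
  simp only [one_pow] at h2
  rw [Real.sq_sqrt (by positivity)] at h2
  simpa using h2.symm

lemma coordA (z₁ : ℂ) (x y : EuclideanSpace ℂ (Fin 2)) :
    ⟪y, Matrix.toEuclideanCLM (𝕜 := ℂ) !![z₁, 0; 0, 0] x⟫_ℂ
      = starRingEnd ℂ (y 0) * (z₁ * x 0) := by
  have h := Matrix.ofLp_toEuclideanCLM (𝕜 := ℂ) !![z₁, 0; 0, 0] x
  have h0 : (Matrix.toEuclideanCLM (𝕜 := ℂ) !![z₁, 0; 0, 0] x) 0 = z₁ * x 0 := by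
    simpa [Matrix.mulVec, dotProduct, Fin.sum_univ_two] using congrFun h 0
  have h1 : (Matrix.toEuclideanCLM (𝕜 := ℂ) !![z₁, 0; 0, 0] x) 1 = 0 := by
    simpa [Matrix.mulVec, dotProduct, Fin.sum_univ_two] using congrFun h 1
  simp [PiLp.inner_apply, Fin.sum_univ_two, h0, h1, Matrix.vecHead, mul_comm, mul_left_comm]

lemma coordB (z₂ : ℂ) (x y : EuclideanSpace ℂ (Fin 2)) :
    ⟪y, Matrix.toEuclideanCLM (𝕜 := ℂ) !![0, 0; z₂, 0] x⟫_ℂ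
      = starRingEnd ℂ (y 1) * (z₂ * x 0) := by
  have h := Matrix.ofLp_toEuclideanCLM (𝕜 := ℂ) !![0, 0; z₂, 0] x
  have h0 : (Matrix.toEuclideanCLM (𝕜 := ℂ) !![0, 0; z₂, 0] x) 0 = 0 := by
    simpa [Matrix.mulVec, dotProduct, Fin.sum_univ_two] using congrFun h 0
  have h1 : (Matrix.toEuclideanCLM (𝕜 := ℂ) !![0, 0; z₂, 0] x) 1 = z₂ * x 0 := by
    simpa [Matrix.mulVec, dotProduct, Fin.sum_univ_two] using congrFun h 1
  simp [PiLp.inner_apply, Fin.sum_univ_two, h0, h1, Matrix.vecHead, mul_comm, mul_left_comm]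

lemma mem_JtW2 (q z₁ z₂ a b c d : ℂ)
    (hx : ‖a‖ ^ 2 + ‖b‖ ^ 2 = 1)
    (hy : ‖c‖ ^ 2 + ‖d‖ ^ 2 = 1)
    (hqc : starRingEnd ℂ c * a + starRingEnd ℂ d * b = q) :
    ![starRingEnd ℂ c * (z₁ * a), starRingEnd ℂ d * (z₂ * a)] ∈
      JtW q ![Matrix.toEuclideanCLM (𝕜 := ℂ) !![z₁, 0; 0, 0],
        Matrix.toEuclideanCLM (𝕜 := ℂ) !![0, 0; z₂, 0]] := by
  refine ⟨vec2 a b, vec2 c d, norm_vec2 _ _ hx, norm_vec2 _ _ hy,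
    by rw [inner_vec2]; exact hqc, ?_⟩
  funext i
  fin_cases i
  · simp only [Fin.mk_zero, Matrix.cons_val_zero, coordA, vec2_zero]
  · simp only [Fin.mk_one, Matrix.cons_val_one, Matrix.head_cons, Matrix.cons_val_zero, coordB, vec2_zero, vec2_one]

theorem stmt_9 (q : ℂ) (hq : ‖q‖ ≤ 1) (z₁ z₂ : ℂ) (h₁ : z₁ ≠ 0) (h₂ : z₂ ≠ 0) :
    ¬ Convex ℝ (JtW q ![Matrix.toEuclideanCLM (𝕜 := ℂ) !![z₁, 0; 0, 0],
        Matrix.toEuclideanCLM (𝕜 := ℂ) !![0, 0; z₂, 0]]) := by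
  intro hconv
  by_cases hq0 : q = 0
  · subst hq0
    have hP1 := mem_JtW2 0 z₁ z₂ 1 0 0 1 (by simp) (by simp) (by simp)
    have hP2 := mem_JtW2 0 z₁ z₂ 1 0 0 (-Complex.I) (by simp) (by simp) (by simp)
    have hM := hconv hP1 hP2 (by norm_num : (0:ℝ) ≤ 1/2) (by norm_num : (0:ℝ) ≤ 1/2)
      (by norm_num)
    obtain ⟨x, y, hx, hy, hxy, hw⟩ := hM
    have e0 := congrFun hw 0
    have e1 := congrFun hw 1
    simp only [Matrix.cons_val_zero, Matrix.cons_val_one, Matrix.head_cons, coordA, coordB,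
      Pi.add_apply, Pi.smul_apply, Complex.real_smul, map_one, map_zero] at e0 e1
    push_cast at e0 e1
    simp only [map_neg, Complex.conj_I, neg_neg] at e1
    have hxy' : starRingEnd ℂ (y 0) * x 0 + starRingEnd ℂ (y 1) * x 1 = 0 := by
      simpa [PiLp.inner_apply, Fin.sum_univ_two, mul_comm] using hxy
    have E0 : z₁ * (starRingEnd ℂ (y 0) * x 0) = 0 := by linear_combination -e0
    have hy0x : starRingEnd ℂ (y 0) * x 0 = 0 := by
      rcases mul_eq_zero.mp E0 with h | h
      · exact absurd h h₁
      · exact h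
    have E1 : starRingEnd ℂ (y 1) * x 0 = (1 + Complex.I) / 2 :=
      mul_left_cancel₀ h₂ (by linear_combination -e1)
    have hne : ((1 + Complex.I) / 2 : ℂ) ≠ 0 := by
      simp [div_eq_zero_iff, Complex.ext_iff]
    have hx0 : x 0 ≠ 0 := by
      intro h; rw [h, mul_zero] at E1; exact hne E1.symm
    have hy1 : starRingEnd ℂ (y 1) ≠ 0 := by
      intro h; rw [h, zero_mul] at E1; exact hne E1.symm
    have hy0 : y 0 = 0 := by
      have := (mul_eq_zero.mp hy0x).resolve_right hx0
      simpa using this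
    have hx1 : x 1 = 0 := by
      rw [hy0, map_zero, zero_mul, zero_add] at hxy'
      exact (mul_eq_zero.mp hxy').resolve_left hy1
    have hax : ‖x 0‖ = 1 := by
      have h' := coords_of_norm_one x hx
      rw [hx1, norm_zero] at h'
      have h'' : (‖x 0‖ - 1) * (‖x 0‖ + 1) = 0 := by nlinarith
      rcases mul_eq_zero.mp h'' with h | h
      · linarith
      · nlinarith [norm_nonneg (x 0)]
    have hay : ‖y 1‖ = 1 := by
      have h' := coords_of_norm_one y hy
      rw [hy0, norm_zero] at h'
      have h'' : (‖y 1‖ - 1) * (‖y 1‖ + 1) = 0 := by nlinarith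
      rcases mul_eq_zero.mp h'' with h | h
      · linarith
      · nlinarith [norm_nonneg (y 1)]
    have E2 : 2 * (starRingEnd ℂ (y 1) * x 0) = 1 + Complex.I := by
      rw [E1]; ring
    have habs := congrArg (‖·‖) E2
    rw [norm_mul, norm_mul, Complex.norm_conj, hax, hay] at habs
    have h4 : (4 : ℝ) = Complex.normSq (1 + Complex.I) := by
      rw [← Complex.sq_norm, ← habs]
      simp
      norm_num
    simp [Complex.normSq_apply] at h4
    norm_num at h4
  · have hq2 : ‖q‖ ^ 2 ≤ 1 := by
      nlinarith [norm_nonneg q]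
    set c : ℝ := Real.sqrt (1 - ‖q‖ ^ 2) with hc
    have hc2 : c ^ 2 = 1 - ‖q‖ ^ 2 := Real.sq_sqrt (by linarith)
    have hcnn : 0 ≤ c := Real.sqrt_nonneg _
    have hA := mem_JtW2 q z₁ z₂ 0 1 (c : ℂ) (starRingEnd ℂ q)
      (by simp)
      (by simp [Complex.norm_real, Complex.norm_of_nonneg hcnn, hc2])
      (by simp)
    have hB := mem_JtW2 q z₁ z₂ q (c : ℂ) 1 0
      (by simp [Complex.norm_real, Complex.norm_of_nonneg hcnn, hc2])
      (by simp)
      (by simp)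
    have hM := hconv hA hB (by norm_num : (0:ℝ) ≤ 1/2) (by norm_num : (0:ℝ) ≤ 1/2)
      (by norm_num)
    obtain ⟨x, y, hx, hy, hxy, hw⟩ := hM
    have e0 := congrFun hw 0
    have e1 := congrFun hw 1
    simp only [Matrix.cons_val_zero, Matrix.cons_val_one, Matrix.head_cons, coordA, coordB,
      Pi.add_apply, Pi.smul_apply, Complex.real_smul, map_one, map_zero] at e0 e1
    push_cast at e0 e1
    have hxy' : starRingEnd ℂ (y 0) * x 0 + starRingEnd ℂ (y 1) * x 1 = q := by
      simpa [PiLp.inner_apply, Fin.sum_univ_two, mul_comm] using hxy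
    have E1 : z₂ * (starRingEnd ℂ (y 1) * x 0) = 0 := by linear_combination -e1
    have hy1x : starRingEnd ℂ (y 1) * x 0 = 0 := by
      rcases mul_eq_zero.mp E1 with h | h
      · exact absurd h h₂
      · exact h
    have hx0 : x 0 ≠ 0 := by
      intro h
      rw [h] at e0
      simp at e0
      rcases e0 with h' | h'
      · exact h₁ h'
      · exact hq0 h'
    have hy1 : starRingEnd ℂ (y 1) = 0 := (mul_eq_zero.mp hy1x).resolve_right hx0
    have hq' : starRingEnd ℂ (y 0) * x 0 = q := by
      rw [hy1, zero_mul, add_zero] at hxy'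
      exact hxy'
    have hfin : z₁ * q = 0 := by linear_combination (-2 : ℂ) * e0 - 2 * z₁ * hq'
    rcases mul_eq_zero.mp hfin with h | h
    · exact h₁ h
    · exact hq0 h
end

section
/- Let T = (T₁,…,T_d) be a d-tuple of commuting bounded operators. Then q·σ_p(T) ⊆ JtW_q(T), where σ_p(T) is the joint point spectrum. -/
open scoped InnerProductSpace

variable {H : Type*} [NormedAddCommGroup H] [InnerProductSpace ℂ H]

lemma exists_unit_inner_eq {H : Type*} [NormedAddCommGroup H] [InnerProductSpace ℂ H]
    (hdim : 2 ≤ Module.rank ℂ H) (u : H) (hu : ‖u‖ = 1) (q : ℂ)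
    (hq : ‖q‖ ≤ 1) : ∃ y : H, ‖y‖ = 1 ∧ ⟪y, u⟫_ℂ = q := by
  -- find a vector not in the span of u
  have hspan : Submodule.span ℂ {u} ≠ ⊤ := by
    intro h
    have h1 : Module.rank ℂ (Submodule.span ℂ ({u} : Set H)) ≤ 1 := by
      simpa using rank_span_le ({u} : Set H)
    rw [h, rank_top] at h1
    exact absurd (hdim.trans h1) (by norm_num)
  obtain ⟨v, hv⟩ : ∃ v : H, v ∉ Submodule.span ℂ {u} := by
    by_contra h
    push_neg at h
    exact hspan (eq_top_iff.2 fun x _ => h x)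
  set w : H := v - ⟪u, v⟫_ℂ • u with hw
  have hwne : w ≠ 0 := by
    intro h
    apply hv
    have : v = ⟪u, v⟫_ℂ • u := by
      have := sub_eq_zero.mp h
      exact this
    rw [this]
    exact Submodule.smul_mem _ _ (Submodule.mem_span_singleton_self u)
  have huu : ⟪u, u⟫_ℂ = 1 := by
    rw [inner_self_eq_norm_sq_to_K, hu]; norm_num
  have huw : ⟪u, w⟫_ℂ = 0 := by
    rw [hw, inner_sub_right, inner_smul_right, huu, mul_one, sub_self]
  set e : H := ((‖w‖⁻¹ : ℝ) : ℂ) • w with he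
  have hew : ‖e‖ = 1 := by
    rw [he, norm_smul]
    simp [norm_ne_zero_iff.2 hwne]
  have hue : ⟪u, e⟫_ℂ = 0 := by
    rw [he, inner_smul_right, huw, mul_zero]
  set c : ℝ := Real.sqrt (1 - ‖q‖ ^ 2) with hc
  have hq2 : (0:ℝ) ≤ 1 - ‖q‖ ^ 2 := by
    have : ‖q‖ ^ 2 ≤ 1 := by
      nlinarith [norm_nonneg q]
    linarith
  have hc2 : c ^ 2 = 1 - ‖q‖ ^ 2 := Real.sq_sqrt hq2
  refine ⟨(starRingEnd ℂ) q • u + (c : ℂ) • e, ?_, ?_⟩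
  · have horth : ⟪(starRingEnd ℂ) q • u, (c : ℂ) • e⟫_ℂ = 0 := by
      rw [inner_smul_left, inner_smul_right, hue]; ring
    have hsq : ‖(starRingEnd ℂ) q • u + (c : ℂ) • e‖ ^ 2 = 1 := by
      rw [@norm_add_sq ℂ _ _ _ _, horth]
      simp only [map_zero, mul_zero, add_zero, zero_add]
      rw [norm_smul, norm_smul, hu, hew, mul_one, mul_one]
      have h1 : ‖(starRingEnd ℂ) q‖ = ‖q‖ := by
        simp
      have h2 : ‖(c : ℂ)‖ = c := by
        simp [Complex.norm_real, Real.sqrt_nonneg, abs_of_nonneg, hc]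
      rw [h1, h2, hc2]
      ring
    nlinarith [norm_nonneg ((starRingEnd ℂ) q • u + (c : ℂ) • e), hsq]
  · rw [inner_add_left, inner_smul_left, inner_smul_left, huu]
    have heu : ⟪e, u⟫_ℂ = 0 := by
      rw [← inner_conj_symm, hue, map_zero]
    rw [heu]
    simp

theorem stmt_10 {d : ℕ} (hdim : 2 ≤ Module.rank ℂ H) (q : ℂ) (hq : ‖q‖ ≤ 1)
    (T : Fin d → H →L[ℂ] H) (hcomm : ∀ i j, Commute (T i) (T j)) :
    (fun ξ : Fin d → ℂ => fun i => q * ξ i) ''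
        {ξ : Fin d → ℂ | ∃ x : H, x ≠ 0 ∧ ∀ i, T i x = ξ i • x} ⊆ JtW q T := by
  rintro z ⟨ξ, ⟨x, hx, hξ⟩, rfl⟩
  set u : H := ((‖x‖⁻¹ : ℝ) : ℂ) • x with hu
  have hun : ‖u‖ = 1 := by
    rw [hu, norm_smul]
    simp [norm_ne_zero_iff.2 hx]
  have hTu : ∀ i, T i u = ξ i • u := by
    intro i
    rw [hu, map_smul, hξ i, smul_comm]
  obtain ⟨y, hy, hyu⟩ := exists_unit_inner_eq hdim u hun q hq
  refine ⟨u, y, hun, hy, hyu, ?_⟩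
  funext i
  rw [hTu i, inner_smul_right, hyu]
  ring
end

section
/- The joint q-numerical radius Jtω_q(·) is a seminorm on B(H)^d; moreover Jtω_q(·) is a norm on B(H)^d if and only if the single-operator q-numerical radius ω_q(·) is a norm on B(H). -/
open scoped InnerProductSpace Pointwise

variable {H : Type*} [NormedAddCommGroup H] [InnerProductSpace ℂ H]

/-- The joint `q`-numerical radius. -/
noncomputable def Jtw {d : ℕ} (q : ℂ) (T : Fin d → H →L[ℂ] H) : ℝ :=
  sSup {r | ∃ x y : H, ‖x‖ = 1 ∧ ‖y‖ = 1 ∧ ⟪y, x⟫_ℂ = q ∧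
    r = Real.sqrt (∑ i, ‖⟪y, (T i) x⟫_ℂ‖ ^ 2)}

/-- The single-operator `q`-numerical radius. -/
noncomputable def wq (q : ℂ) (S : H →L[ℂ] H) : ℝ :=
  sSup {r | ∃ x y : H, ‖x‖ = 1 ∧ ‖y‖ = 1 ∧ ⟪y, x⟫_ℂ = q ∧ r = ‖⟪y, S x⟫_ℂ‖}


lemma exists_pair (hdim : 2 ≤ Module.rank ℂ H) {q : ℂ} (hq : ‖q‖ ≤ 1) :
    ∃ x y : H, ‖x‖ = 1 ∧ ‖y‖ = 1 ∧ ⟪y, x⟫_ℂ = q := by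
  have h0 : (0:Cardinal) < Module.rank ℂ H := lt_of_lt_of_le (by norm_num) hdim
  rw [rank_pos_iff_exists_ne_zero] at h0
  obtain ⟨v, hv⟩ := h0
  obtain ⟨e1, hne1⟩ : ∃ e1 : H, ‖e1‖ = 1 :=
    ⟨‖v‖⁻¹ • v, by rw [norm_smul, norm_inv, norm_norm,
      inv_mul_cancel₀ (norm_ne_zero_iff.2 hv)]⟩
  have hK : (ℂ ∙ e1)ᗮ ≠ ⊥ := by
    intro hbot
    have hT : (ℂ ∙ e1) = ⊤ := by rwa [Submodule.orthogonal_eq_bot_iff] at hbot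
    have h1 : Module.rank ℂ H ≤ 1 := by
      calc Module.rank ℂ H = Module.rank ℂ (⊤ : Submodule ℂ H) := (rank_top ℂ H).symm
        _ = Module.rank ℂ (ℂ ∙ e1) := by rw [hT]
        _ ≤ 1 := by simpa using rank_span_le (R := ℂ) (M := H) {e1}
    exact absurd (hdim.trans h1) (by norm_num)
  obtain ⟨w, hwK, hw0⟩ := Submodule.exists_mem_ne_zero_of_ne_bot hK
  obtain ⟨e2, hne2, horth, horth'⟩ :
      ∃ e2 : H, ‖e2‖ = 1 ∧ ⟪e2, e1⟫_ℂ = 0 ∧ ⟪e1, e2⟫_ℂ = 0 := by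
    refine ⟨‖w‖⁻¹ • w, by rw [norm_smul, norm_inv, norm_norm,
      inv_mul_cancel₀ (norm_ne_zero_iff.2 hw0)], ?_, ?_⟩
    · have h2 : (‖w‖⁻¹ • w : H) ∈ (ℂ ∙ e1)ᗮ := Submodule.smul_mem _ _ hwK
      have := (Submodule.mem_orthogonal _ _).1 h2 e1 (Submodule.mem_span_singleton_self e1)
      rw [← inner_conj_symm, this, map_zero]
    · have h2 : (‖w‖⁻¹ • w : H) ∈ (ℂ ∙ e1)ᗮ := Submodule.smul_mem _ _ hwK
      exact (Submodule.mem_orthogonal _ _).1 h2 e1 (Submodule.mem_span_singleton_self e1)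
  set s : ℝ := Real.sqrt (1 - ‖q‖ ^ 2) with hs
  have hs2 : s ^ 2 = 1 - ‖q‖ ^ 2 := by
    rw [hs, Real.sq_sqrt]
    nlinarith [norm_nonneg q]
  refine ⟨e1, (starRingEnd ℂ q) • e1 + (s:ℂ) • e2, hne1, ?_, ?_⟩
  · have hin : ⟪(starRingEnd ℂ q) • e1, (s:ℂ) • e2⟫_ℂ = 0 := by
      rw [inner_smul_left, inner_smul_right, horth']; ring
    have hpy : ‖(starRingEnd ℂ q) • e1 + (s:ℂ) • e2‖ * ‖(starRingEnd ℂ q) • e1 + (s:ℂ) • e2‖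
        = 1 := by
      rw [norm_add_sq_eq_norm_sq_add_norm_sq_of_inner_eq_zero _ _ hin,
        norm_smul, norm_smul, hne1, hne2]
      have hc : ‖(starRingEnd ℂ q)‖ = ‖q‖ := by simp
      have hsn : ‖(s:ℂ)‖ = s := by
        simp [abs_of_nonneg (Real.sqrt_nonneg _)]
        exact Real.sqrt_nonneg _
      rw [hc, hsn]; nlinarith
    nlinarith [norm_nonneg ((starRingEnd ℂ q) • e1 + (s:ℂ) • e2)]
  · rw [inner_add_left, inner_smul_left, inner_smul_left, horth]
    have h11 : ⟪e1, e1⟫_ℂ = 1 := by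
      rw [inner_self_eq_norm_sq_to_K, hne1]; norm_num
    rw [h11]
    simp

lemma jtw_set_nonempty {d : ℕ} (hdim : 2 ≤ Module.rank ℂ H) {q : ℂ}
    (hq : ‖q‖ ≤ 1) (T : Fin d → H →L[ℂ] H) :
    {r | ∃ x y : H, ‖x‖ = 1 ∧ ‖y‖ = 1 ∧ ⟪y, x⟫_ℂ = q ∧
      r = Real.sqrt (∑ i, ‖⟪y, (T i) x⟫_ℂ‖ ^ 2)}.Nonempty := by
  obtain ⟨x, y, hx, hy, hxy⟩ := exists_pair hdim hq
  exact ⟨_, x, y, hx, hy, hxy, rfl⟩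

lemma jtw_bdd {d : ℕ} (q : ℂ) (T : Fin d → H →L[ℂ] H) :
    BddAbove {r | ∃ x y : H, ‖x‖ = 1 ∧ ‖y‖ = 1 ∧ ⟪y, x⟫_ℂ = q ∧
      r = Real.sqrt (∑ i, ‖⟪y, (T i) x⟫_ℂ‖ ^ 2)} := by
  refine ⟨Real.sqrt (∑ i, ‖T i‖ ^ 2), ?_⟩
  rintro r ⟨x, y, hx, hy, hxy, rfl⟩
  apply Real.sqrt_le_sqrt
  apply Finset.sum_le_sum
  intro i _
  have h1 : ‖⟪y, (T i) x⟫_ℂ‖ ≤ ‖T i‖ := by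
    calc ‖⟪y, (T i) x⟫_ℂ‖ = ‖⟪y, (T i) x⟫_ℂ‖ := rfl
      _ ≤ ‖y‖ * ‖(T i) x‖ := norm_inner_le_norm _ _
      _ ≤ ‖y‖ * (‖T i‖ * ‖x‖) := by
          exact mul_le_mul_of_nonneg_left ((T i).le_opNorm x) (norm_nonneg y)
      _ = ‖T i‖ := by rw [hx, hy]; ring
  exact pow_le_pow_left₀ (norm_nonneg _) h1 2

lemma wq_bdd (q : ℂ) (S : H →L[ℂ] H) :
    BddAbove {r | ∃ x y : H, ‖x‖ = 1 ∧ ‖y‖ = 1 ∧ ⟪y, x⟫_ℂ = q ∧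
      r = ‖⟪y, S x⟫_ℂ‖} := by
  refine ⟨‖S‖, ?_⟩
  rintro r ⟨x, y, hx, hy, hxy, rfl⟩
  calc ‖⟪y, S x⟫_ℂ‖ = ‖⟪y, S x⟫_ℂ‖ := rfl
    _ ≤ ‖y‖ * ‖S x‖ := norm_inner_le_norm _ _
    _ ≤ ‖y‖ * (‖S‖ * ‖x‖) := mul_le_mul_of_nonneg_left (S.le_opNorm x) (norm_nonneg y)
    _ = ‖S‖ := by rw [hx, hy]; ring

lemma jtw_nonneg {d : ℕ} (hdim : 2 ≤ Module.rank ℂ H) {q : ℂ}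
    (hq : ‖q‖ ≤ 1) (T : Fin d → H →L[ℂ] H) : 0 ≤ Jtw q T := by
  obtain ⟨r, hr⟩ := jtw_set_nonempty hdim hq T
  have h1 : r ≤ Jtw q T := le_csSup (jtw_bdd q T) hr
  obtain ⟨x, y, _, _, _, rfl⟩ := hr
  exact le_trans (Real.sqrt_nonneg _) h1

theorem stmt_12 {d : ℕ} (hd : 0 < d) (hdim : 2 ≤ Module.rank ℂ H) (q : ℂ)
    (hq : ‖q‖ ≤ 1) :
    (∀ T : Fin d → H →L[ℂ] H, 0 ≤ Jtw q T) ∧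
    (∀ (c : ℂ) (T : Fin d → H →L[ℂ] H), Jtw q (c • T) = ‖c‖ * Jtw q T) ∧
    (∀ T S : Fin d → H →L[ℂ] H, Jtw q (T + S) ≤ Jtw q T + Jtw q S) ∧
    ((∀ T : Fin d → H →L[ℂ] H, Jtw q T = 0 → T = 0) ↔
      (∀ S : H →L[ℂ] H, wq q S = 0 → S = 0)) := by
  refine ⟨fun T => jtw_nonneg hdim hq T, ?_, ?_, ?_⟩
  · -- homogeneity
    intro c T
    have hset : {r | ∃ x y : H, ‖x‖ = 1 ∧ ‖y‖ = 1 ∧ ⟪y, x⟫_ℂ = q ∧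
        r = Real.sqrt (∑ i, ‖⟪y, ((c • T) i) x⟫_ℂ‖ ^ 2)} =
        ‖c‖ • {r | ∃ x y : H, ‖x‖ = 1 ∧ ‖y‖ = 1 ∧ ⟪y, x⟫_ℂ = q ∧
        r = Real.sqrt (∑ i, ‖⟪y, (T i) x⟫_ℂ‖ ^ 2)} := by
      have key : ∀ (x y : H), Real.sqrt (∑ i, ‖⟪y, ((c • T) i) x⟫_ℂ‖ ^ 2) =
          ‖c‖ * Real.sqrt (∑ i, ‖⟪y, (T i) x⟫_ℂ‖ ^ 2) := by
        intro x y
        have : ∀ i : Fin d, ‖⟪y, ((c • T) i) x⟫_ℂ‖ ^ 2 =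
            ‖c‖ ^ 2 * ‖⟪y, (T i) x⟫_ℂ‖ ^ 2 := by
          intro i
          simp only [Pi.smul_apply, ContinuousLinearMap.smul_apply, inner_smul_right, map_mul, norm_mul,
            mul_pow]
        rw [Finset.sum_congr rfl (fun i _ => this i), ← Finset.mul_sum,
          Real.sqrt_mul (by positivity), Real.sqrt_sq (norm_nonneg c)]
      ext r
      constructor
      · rintro ⟨x, y, hx, hy, hxy, rfl⟩
        exact ⟨_, ⟨x, y, hx, hy, hxy, rfl⟩, (key x y).symm⟩
      · rintro ⟨r', ⟨x, y, hx, hy, hxy, rfl⟩, rfl⟩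
        exact ⟨x, y, hx, hy, hxy, (key x y).symm⟩
    rw [Jtw, hset, Real.sSup_smul_of_nonneg (norm_nonneg c)]
    rfl
  · -- triangle
    intro T S
    apply csSup_le (jtw_set_nonempty hdim hq _)
    rintro r ⟨x, y, hx, hy, hxy, rfl⟩
    have key : Real.sqrt (∑ i, ‖⟪y, ((T + S) i) x⟫_ℂ‖ ^ 2) ≤
        Real.sqrt (∑ i, ‖⟪y, (T i) x⟫_ℂ‖ ^ 2) +
        Real.sqrt (∑ i, ‖⟪y, (S i) x⟫_ℂ‖ ^ 2) := by
      set u : EuclideanSpace ℂ (Fin d) := WithLp.toLp 2 (fun i => ⟪y, (T i) x⟫_ℂ) with hu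
      set v : EuclideanSpace ℂ (Fin d) := WithLp.toLp 2 (fun i => ⟪y, (S i) x⟫_ℂ) with hv
      have h1 : Real.sqrt (∑ i, ‖⟪y, ((T + S) i) x⟫_ℂ‖ ^ 2) = ‖u + v‖ := by
        rw [EuclideanSpace.norm_eq]
        congr 1
        apply Finset.sum_congr rfl
        intro i _
        simp only [Pi.add_apply, ContinuousLinearMap.add_apply, inner_add_right]
        rfl
      have h2 : Real.sqrt (∑ i, ‖⟪y, (T i) x⟫_ℂ‖ ^ 2) = ‖u‖ := by
        rw [EuclideanSpace.norm_eq]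
      have h3 : Real.sqrt (∑ i, ‖⟪y, (S i) x⟫_ℂ‖ ^ 2) = ‖v‖ := by
        rw [EuclideanSpace.norm_eq]
      rw [h1, h2, h3]
      exact norm_add_le u v
    refine key.trans (add_le_add ?_ ?_)
    · exact le_csSup (jtw_bdd q T) ⟨x, y, hx, hy, hxy, rfl⟩
    · exact le_csSup (jtw_bdd q S) ⟨x, y, hx, hy, hxy, rfl⟩
  · constructor
    · intro hJ S hS
      have hT : Jtw q (fun _ : Fin d => S) = 0 := by
        apply le_antisymm
        · apply csSup_le (jtw_set_nonempty hdim hq _)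
          rintro r ⟨x, y, hx, hy, hxy, rfl⟩
          have habs : ‖⟪y, S x⟫_ℂ‖ = 0 := by
            have hle : ‖⟪y, S x⟫_ℂ‖ ≤ wq q S :=
              le_csSup (wq_bdd q S) ⟨x, y, hx, hy, hxy, rfl⟩
            rw [hS] at hle
            exact le_antisymm hle (norm_nonneg _)
          simp [habs]
        · exact jtw_nonneg hdim hq _
      have := hJ _ hT
      have h0 := congrFun this ⟨0, hd⟩
      simpa using h0
    · intro hw T hT
      funext i
      apply hw
      apply le_antisymm
      · apply csSup_le
        · obtain ⟨x, y, hx, hy, hxy⟩ := exists_pair hdim hq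
          exact ⟨_, x, y, hx, hy, hxy, rfl⟩
        rintro r ⟨x, y, hx, hy, hxy, rfl⟩
        have h1 : ‖⟪y, (T i) x⟫_ℂ‖ ≤
            Real.sqrt (∑ j, ‖⟪y, (T j) x⟫_ℂ‖ ^ 2) := by
          rw [Real.le_sqrt (norm_nonneg _)]
          · exact Finset.single_le_sum (f := fun j => ‖⟪y, (T j) x⟫_ℂ‖ ^ 2) (fun j _ => sq_nonneg _) (Finset.mem_univ i)
          · positivity
        have h2 : Real.sqrt (∑ j, ‖⟪y, (T j) x⟫_ℂ‖ ^ 2) ≤ Jtw q T :=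
          le_csSup (jtw_bdd q T) ⟨x, y, hx, hy, hxy, rfl⟩
        rw [hT] at h2
        exact h1.trans h2
      · obtain ⟨x, y, hx, hy, hxy⟩ := exists_pair hdim hq
        have : ‖⟪y, (T i) x⟫_ℂ‖ ∈ {r | ∃ x y : H, ‖x‖ = 1 ∧ ‖y‖ = 1 ∧
            ⟪y, x⟫_ℂ = q ∧ r = ‖⟪y, (T i) x⟫_ℂ‖} := ⟨x, y, hx, hy, hxy, rfl⟩
        exact le_trans (norm_nonneg _) (le_csSup (wq_bdd q (T i)) this)
end

section
/- Let A be a positive bounded operator on H with dim R(A) = 1 and T ∈ B(H). Then the A-q-numerical range W_{q,A}(T) is nonempty if and only if |q| = 1. -/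
open scoped InnerProductSpace

variable {H : Type*} [NormedAddCommGroup H] [InnerProductSpace ℂ H]

/-- The semi-inner product `⟨x,y⟩_A = ⟨Ax,y⟩` induced by a positive operator `A`
(linear in the first argument, as in the paper). -/
noncomputable def innA (A : H →L[ℂ] H) (x y : H) : ℂ := ⟪y, A x⟫_ℂ

/-- The seminorm `‖x‖_A = ⟨x,x⟩_A^{1/2}` induced by a positive operator `A`. -/
noncomputable def normA (A : H →L[ℂ] H) (x : H) : ℝ := Real.sqrt (⟪x, A x⟫_ℂ).re

/-- The `A`-`q`-numerical range `W_{q,A}(T) = {⟨Tx,y⟩_A : ‖x‖_A = ‖y‖_A = 1, ⟨x,y⟩_A = q}`. -/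
def WqA (q : ℂ) (A T : H →L[ℂ] H) : Set ℂ :=
  {z | ∃ x y : H, normA A x = 1 ∧ normA A y = 1 ∧ innA A x y = q ∧ z = innA A (T x) y}

/-- The `A`-`q`-numerical radius. -/
noncomputable def wqA (q : ℂ) (A T : H →L[ℂ] H) : ℝ :=
  sSup {r | ∃ x y : H, normA A x = 1 ∧ normA A y = 1 ∧ innA A x y = q ∧
    r = ‖innA A (T x) y‖}

lemma key (A : H →L[ℂ] H) (u : H) (hu : ∀ z : H, ∃ c : ℂ, A z = c • u) (x y : H) :
    innA A x y * innA A y x = innA A x x * innA A y y := by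
  obtain ⟨cx, hx⟩ := hu x
  obtain ⟨cy, hy⟩ := hu y
  simp only [innA, hx, hy, inner_smul_right]
  ring

lemma conj_innA [CompleteSpace H] (A : H →L[ℂ] H) (hA : IsSelfAdjoint A) (x y : H) :
    innA A y x = (starRingEnd ℂ) (innA A x y) := by
  have hs := (ContinuousLinearMap.isSelfAdjoint_iff_isSymmetric.mp hA)
  simp only [innA]
  exact ((hs x y).symm).trans ((inner_conj_symm (A x) y).symm)

lemma innA_smul (A : H →L[ℂ] H) (a b : ℂ) (w z : H) :
    innA A (a • w) (b • z) = a * (starRingEnd ℂ) b * innA A w z := by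
  simp only [innA, ContinuousLinearMap.map_smul, inner_smul_left, inner_smul_right]
  ring

lemma normA_eq (A : H →L[ℂ] H) (x : H) : normA A x = Real.sqrt (innA A x x).re := rfl

theorem stmt_17 [CompleteSpace H] (A : H →L[ℂ] H) (hA : A.IsPositive)
    (hrank : Module.rank ℂ (LinearMap.range (A : H →ₗ[ℂ] H)) = 1)
    (q : ℂ) (hq : ‖q‖ ≤ 1) (T : H →L[ℂ] H) :
    (WqA q A T).Nonempty ↔ ‖q‖ = 1 := by
  obtain ⟨u₀, hu0, hspan⟩ := rank_eq_one_iff.mp hrank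
  set u : H := (u₀ : H) with hu_def
  have hu_ne : u ≠ 0 := fun h => hu0 (Subtype.ext h)
  have hu : ∀ z : H, ∃ c : ℂ, A z = c • u := by
    intro z
    obtain ⟨c, hc⟩ := hspan ⟨A z, LinearMap.mem_range_self (A : H →ₗ[ℂ] H) z⟩
    exact ⟨c, by simpa using congrArg Subtype.val hc.symm⟩
  obtain ⟨v, hv⟩ : ∃ v, A v = u := u₀.2
  have hconj := conj_innA A hA.isSelfAdjoint
  have hre_nonneg : ∀ x : H, 0 ≤ (innA A x x).re := by
    intro x
    have h0 := hA.inner_nonneg_right x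
    simp only [innA]
    simpa using (Complex.le_def.mp h0).1
  have hreal : ∀ x : H, innA A x x = ((innA A x x).re : ℂ) := by
    intro x
    exact (Complex.conj_eq_iff_re.mp (hconj x x).symm).symm
  have habs : ∀ x y : H, Complex.normSq (innA A x y) = (innA A x x).re * (innA A y y).re := by
    intro x y
    have h1 := key A u hu x y
    rw [hconj x y, Complex.mul_conj, hreal x, hreal y] at h1
    exact_mod_cast h1
  have hnorm_sq : ∀ x : H, normA A x ^ 2 = (innA A x x).re := by
    intro x
    rw [normA_eq]
    exact Real.sq_sqrt (hre_nonneg x)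
  constructor
  · rintro ⟨z, x, y, hx1, hy1, hxy, -⟩
    have h := habs x y
    rw [hxy] at h
    have hx2 : (innA A x x).re = 1 := by rw [← hnorm_sq, hx1]; norm_num
    have hy2 : (innA A y y).re = 1 := by rw [← hnorm_sq, hy1]; norm_num
    rw [hx2, hy2, mul_one] at h
    have h2 := Complex.sq_norm q
    nlinarith [norm_nonneg q]
  · intro hq1
    have hvu : innA A v u = ((‖u‖ : ℂ))^2 := by
      simp [innA, hv, inner_self_eq_norm_sq_to_K]
    have h0 := habs v u
    set t := (innA A v v).re with ht_def
    set s := (innA A u u).re with hs_def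
    have hts : t * s = ‖u‖ ^ 4 := by
      rw [hvu] at h0
      rw [← h0]
      rw [show ((‖u‖ : ℂ))^2 = ((‖u‖^2 : ℝ) : ℂ) by push_cast; ring, Complex.normSq_ofReal]
      ring
    have hu_pos : 0 < ‖u‖ := norm_pos_iff.mpr hu_ne
    have ht : 0 < t := by
      have h1 : 0 ≤ t := hre_nonneg v
      have h2 : 0 ≤ s := hre_nonneg u
      nlinarith [pow_pos hu_pos 4]
    have hst : 0 < Real.sqrt t := Real.sqrt_pos.mpr ht
    set a : ℂ := ((Real.sqrt t : ℝ) : ℂ)⁻¹ with ha_def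
    set d : ℂ := (starRingEnd ℂ) q * (((Real.sqrt t : ℝ) : ℂ) / ((‖u‖ : ℂ)^2)) with hd_def
    set x := a • v with hx_def
    set y := d • u with hy_def
    have hxx : (innA A x x).re = 1 := by
      rw [hx_def, innA_smul]
      rw [show a * (starRingEnd ℂ) a = ((t⁻¹ : ℝ) : ℂ) by
        rw [ha_def]
        simp only [map_inv₀, Complex.conj_ofReal]
        rw [← mul_inv, ← Complex.ofReal_mul, Real.mul_self_sqrt ht.le,
          Complex.ofReal_inv]]
      rw [hreal v, ← ht_def, ← Complex.ofReal_mul, Complex.ofReal_re,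
        inv_mul_cancel₀ ht.ne']
    have hyy : (innA A y y).re = 1 := by
      rw [hy_def, innA_smul]
      have hdd : d * (starRingEnd ℂ) d = ((Complex.normSq d : ℝ) : ℂ) :=
        Complex.mul_conj d
      have hnsd : Complex.normSq d = t / ‖u‖ ^ 4 := by
        rw [hd_def, map_mul]
        rw [Complex.normSq_conj]
        have : Complex.normSq q = 1 := by
          rw [← Complex.sq_norm, hq1]; norm_num
        rw [this, one_mul]
        rw [show (((Real.sqrt t : ℝ) : ℂ) / ((‖u‖ : ℂ)^2)) = (((Real.sqrt t / ‖u‖^2 : ℝ)) : ℂ) by push_cast; ring]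
        rw [Complex.normSq_ofReal, div_mul_div_comm, Real.mul_self_sqrt ht.le,
          show ‖u‖^2*‖u‖^2 = ‖u‖^4 by ring]
      rw [hdd, hnsd, hreal u, ← hs_def, ← Complex.ofReal_mul, Complex.ofReal_re,
        div_mul_eq_mul_div, hts, div_self (by positivity)]
    have hxy : innA A x y = q := by
      rw [hx_def, hy_def, innA_smul, hvu]
      rw [ha_def, hd_def]
      rw [map_mul, Complex.conj_conj, map_div₀, Complex.conj_ofReal]
      rw [show (starRingEnd ℂ) ((‖u‖ : ℂ)^2) = (‖u‖ : ℂ)^2 by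
        rw [map_pow, Complex.conj_ofReal]]
      have h1 : ((Real.sqrt t : ℝ) : ℂ) ≠ 0 := by exact_mod_cast hst.ne'
      have h2 : ((‖u‖ : ℝ) : ℂ) ≠ 0 := by exact_mod_cast hu_pos.ne'
      field_simp
    refine ⟨innA A (T x) y, x, y, ?_, ?_, hxy, rfl⟩
    · rw [normA_eq, hxx]; exact Real.sqrt_one
    · rw [normA_eq, hyy]; exact Real.sqrt_one
end

section
/- Let A be a positive operator on H with dim R(A) ≥ 2, |q| ≤ 1, and let T, S be A^{1/2}-bounded operators. Then w_{q,A}(T+S) = w_{q,A}(T) + w_{q,A}(S) holds if and only if there exists a sequence (xₙ, yₙ) in S_{q,A}(H) such that lim_{n→∞} Re(⟨yₙ, Txₙ⟩_A · ⟨Sxₙ, yₙ⟩_A) = w_{q,A}(T)·w_{q,A}(S). -/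
open scoped InnerProductSpace

variable {H : Type*} [NormedAddCommGroup H] [InnerProductSpace ℂ H]

section aux
variable [CompleteSpace H]
variable {A : H →L[ℂ] H}

lemma aux19_sw (hA : A.IsPositive) (x y : H) : ⟪A x, y⟫_ℂ = ⟪x, A y⟫_ℂ := by
  rw [← ContinuousLinearMap.adjoint_inner_left, hA.isSelfAdjoint.adjoint_eq]

lemma aux19_conj_symm (hA : A.IsPositive) (x y : H) :
    innA A x y = (starRingEnd ℂ) (innA A y x) := by
  unfold innA
  rw [← inner_conj_symm, aux19_sw hA]

lemma aux19_norm_nonneg (x : H) : 0 ≤ normA A x := Real.sqrt_nonneg _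

lemma aux19_inner_self (hA : A.IsPositive) (x : H) :
    innA A x x = ((normA A x : ℝ) : ℂ) ^ 2 := by
  have hre : 0 ≤ (⟪x, A x⟫_ℂ).re := hA.re_inner_nonneg_right x
  have hconj : (starRingEnd ℂ) (⟪x, A x⟫_ℂ) = ⟪x, A x⟫_ℂ := by
    rw [inner_conj_symm, aux19_sw hA]
  have hreal : ⟪x, A x⟫_ℂ = ((⟪x, A x⟫_ℂ).re : ℂ) := (Complex.conj_eq_iff_re.mp hconj).symm
  unfold innA normA
  rw [hreal]
  norm_cast
  rw [Real.sq_sqrt hre]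

lemma aux19_smul_left (c : ℂ) (x y : H) : innA A (c • x) y = c * innA A x y := by
  unfold innA; rw [map_smul, inner_smul_right]

lemma aux19_smul_right (c : ℂ) (x y : H) :
    innA A x (c • y) = (starRingEnd ℂ) c * innA A x y := by
  unfold innA; rw [inner_smul_left]

lemma aux19_add_left (x z y : H) : innA A (x + z) y = innA A x y + innA A z y := by
  unfold innA; rw [map_add, inner_add_right]

lemma aux19_add_right (x z y : H) : innA A x (y + z) = innA A x y + innA A x z := by
  unfold innA; rw [inner_add_left]

lemma aux19_normA_smul (hA : A.IsPositive) (c : ℂ) (x : H) :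
    normA A (c • x) = ‖c‖ * normA A x := by
  unfold normA
  rw [map_smul, inner_smul_left, inner_smul_right, ← mul_assoc]
  have h1 : (starRingEnd ℂ) c * c = ((‖c‖ ^ 2 : ℝ) : ℂ) := by
    rw [mul_comm, Complex.mul_conj, Complex.normSq_eq_norm_sq]
  rw [h1, Complex.re_ofReal_mul, Real.sqrt_mul (sq_nonneg _), Real.sqrt_sq (norm_nonneg c)]

/-- Cauchy–Schwarz for the semi-inner product induced by a positive operator. -/
lemma aux19_cs (hA : A.IsPositive) (x y : H) :
    ‖innA A x y‖ ≤ normA A x * normA A y := by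
  set t : ℂ := innA A x y with ht
  by_cases h0 : t = 0
  · rw [h0, norm_zero]
    exact mul_nonneg (aux19_norm_nonneg x) (aux19_norm_nonneg y)
  set p : ℝ := (⟪x, A x⟫_ℂ).re with hp
  set m : ℝ := (⟪y, A y⟫_ℂ).re with hm
  have hp0 : 0 ≤ p := hA.re_inner_nonneg_right x
  have hm0 : 0 ≤ m := hA.re_inner_nonneg_right y
  have key : ∀ r : ℝ, 0 ≤ p - 2 * r * ‖t‖ + r ^ 2 * m := by
    intro r
    set c : ℂ := (r : ℂ) * (t / (‖t‖ : ℝ)) with hc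
    have habs : (‖t‖ : ℝ) ≠ 0 := by
      simpa using h0
    have hexp : 0 ≤ (⟪x - c • y, A (x - c • y)⟫_ℂ).re := hA.re_inner_nonneg_right _
    have hxAy : ⟪x, A y⟫_ℂ = (starRingEnd ℂ) t := by
      rw [ht]
      have := aux19_conj_symm hA y x
      unfold innA at this ⊢
      rw [this]
    have hexp2 : ⟪x - c • y, A (x - c • y)⟫_ℂ
        = ⟪x, A x⟫_ℂ - c * (starRingEnd ℂ) t - (starRingEnd ℂ) c * t
          + (starRingEnd ℂ) c * c * ⟪y, A y⟫_ℂ := by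
      rw [map_sub, map_smul, inner_sub_left, inner_sub_right, inner_sub_right,
        inner_smul_left, inner_smul_right, inner_smul_left, inner_smul_right]
      rw [hxAy]
      have hyAx : ⟪y, A x⟫_ℂ = t := rfl
      rw [hyAx]
      ring
    have hcast : ((‖t‖ : ℝ) : ℂ) ≠ 0 := by exact_mod_cast habs
    have hct : (starRingEnd ℂ) c * t = ((r * ‖t‖ : ℝ) : ℂ) := by
      have hconjc : (starRingEnd ℂ) c = (r : ℂ) * ((starRingEnd ℂ) t / ((‖t‖ : ℝ) : ℂ)) := by
        rw [hc, map_mul, map_div₀]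
        norm_num [Complex.conj_ofReal]
      rw [hconjc, mul_assoc, div_mul_eq_mul_div, mul_comm ((starRingEnd ℂ) t) t,
        Complex.mul_conj, Complex.normSq_eq_norm_sq]
      push_cast
      rw [pow_two, mul_div_assoc, div_self hcast, mul_one]
    have hct' : c * (starRingEnd ℂ) t = ((r * ‖t‖ : ℝ) : ℂ) := by
      have h := congrArg (starRingEnd ℂ) hct
      rw [map_mul, Complex.conj_conj, Complex.conj_ofReal] at h
      exact h
    have hcc : (starRingEnd ℂ) c * c = ((r ^ 2 : ℝ) : ℂ) := by
      have habsc : ‖c‖ = |r| := by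
        rw [hc, norm_mul, norm_div, Complex.norm_real, Complex.norm_real,
          Real.norm_eq_abs, Real.norm_eq_abs, abs_of_nonneg (norm_nonneg t), div_self habs, mul_one]
      rw [mul_comm, Complex.mul_conj, Complex.normSq_eq_norm_sq, habsc, sq_abs]
    rw [hexp2, hct, hct', hcc] at hexp
    simp only [Complex.sub_re, Complex.add_re, Complex.ofReal_re, Complex.re_ofReal_mul] at hexp
    rw [hp, hm]
    nlinarith [hexp]
  rcases eq_or_lt_of_le hm0 with hmz | hmpos
  · exfalso
    have habs : (0:ℝ) < ‖t‖ := by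
      simpa [norm_pos_iff] using h0
    have h1 := key ((p + 1) / (2 * ‖t‖))
    rw [← hmz] at h1
    have e1 : 2 * ((p + 1) / (2 * ‖t‖)) * ‖t‖ = p + 1 := by
      field_simp
    rw [e1] at h1
    linarith
  · have h2 : ‖t‖ ^ 2 ≤ p * m := by
      have h1 := key (‖t‖ / m)
      have hmne : m ≠ 0 := ne_of_gt hmpos
      have e1 : p - 2 * (‖t‖ / m) * ‖t‖ + (‖t‖ / m) ^ 2 * m
          = p - ‖t‖ ^ 2 / m := by
        field_simp
        ring
      rw [e1] at h1
      have h2 : ‖t‖ ^ 2 / m ≤ p := by linarith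
      calc ‖t‖ ^ 2 = ‖t‖ ^ 2 / m * m := by field_simp
        _ ≤ p * m := by
          exact mul_le_mul_of_nonneg_right h2 (le_of_lt hmpos)
    have h3 : ‖t‖ ≤ Real.sqrt (p * m) := by
      rw [← Real.sqrt_sq (norm_nonneg t)]
      exact Real.sqrt_le_sqrt h2
    calc ‖t‖ ≤ Real.sqrt (p * m) := h3
      _ = Real.sqrt p * Real.sqrt m := Real.sqrt_mul hp0 m
      _ = normA A x * normA A y := rfl

lemma aux19_zero_of_normA_zero (hA : A.IsPositive) {x : H} (hx : normA A x = 0) (y : H) :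
    innA A x y = 0 := by
  have h := aux19_cs hA x y
  rw [hx, zero_mul] at h
  exact norm_eq_zero.mp (le_antisymm h (norm_nonneg _))

lemma aux19_Ax_eq_zero (hA : A.IsPositive) {x : H} (hx : normA A x = 0) : A x = 0 := by
  have h := aux19_zero_of_normA_zero hA hx (A x)
  unfold innA at h
  exact inner_self_eq_zero.mp h

lemma aux19_sub_left (x z y : H) : innA A (x - z) y = innA A x y - innA A z y := by
  unfold innA; rw [map_sub, inner_sub_right]

lemma aux19_exists_pair (hA : A.IsPositive)
    (hrank : 2 ≤ Module.rank ℂ (LinearMap.range (A : H →ₗ[ℂ] H)))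
    {q : ℂ} (hq : ‖q‖ ≤ 1) :
    ∃ x y : H, normA A x = 1 ∧ normA A y = 1 ∧ innA A x y = q := by
  obtain ⟨g, hg⟩ := exists_linearIndependent_of_le_rank
    (R := ℂ) (M := ↥(LinearMap.range (A : H →ₗ[ℂ] H))) (n := 2) (by exact_mod_cast hrank)
  have hg' : LinearIndependent ℂ (fun i => ((g i : H))) :=
    hg.map' (Submodule.subtype _) (Submodule.ker_subtype _)
  have hind := Fintype.linearIndependent_iff.mp hg'
  obtain ⟨u, hu⟩ := LinearMap.mem_range.mp (g 0).2
  obtain ⟨v, hv⟩ := LinearMap.mem_range.mp (g 1).2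
  have hu' : A u = ((g 0 : H)) := by simpa using hu
  have hv' : A v = ((g 1 : H)) := by simpa using hv
  have hAu : A u ≠ 0 := by
    intro h
    have h2 := hind ![1, 0] (by
      rw [Fin.sum_univ_two]
      simp [← hu', ← hv', h]) 0
    simp at h2
  have hnd : ∀ d : ℂ, A v ≠ d • A u := by
    intro d h
    have h2 := hind ![d, -1] (by
      rw [Fin.sum_univ_two]
      simp only [Matrix.cons_val_zero, Matrix.cons_val_one, Matrix.head_cons, ← hu', ← hv', h]
      simp) 1
    simp at h2
  have hna : normA A u ≠ 0 := fun h => hAu (aux19_Ax_eq_zero hA h)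
  have ha : 0 < normA A u := lt_of_le_of_ne (aux19_norm_nonneg u) (Ne.symm hna)
  set a : ℝ := normA A u with haa
  set e : H := ((a : ℂ)⁻¹) • u with he
  have hne : normA A e = 1 := by
    rw [he, aux19_normA_smul hA, norm_inv, Complex.norm_real, Real.norm_eq_abs, abs_of_pos ha, ← haa,
      inv_mul_cancel₀ hna]
  have hee : innA A e e = 1 := by
    rw [aux19_inner_self hA, hne]
    norm_num
  set c : ℂ := innA A v e with hcc
  set f₀ : H := v - c • e with hf0
  have hf0e : innA A f₀ e = 0 := by
    rw [hf0, aux19_sub_left, aux19_smul_left, hee, mul_one, ← hcc, sub_self]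
  have hAf : A f₀ ≠ 0 := by
    intro h
    apply hnd (c * (a : ℂ)⁻¹)
    have : A f₀ = A v - (c * (a : ℂ)⁻¹) • A u := by
      rw [hf0, map_sub, map_smul, he, map_smul, smul_smul]
    rw [this] at h
    rw [← sub_eq_zero]
    exact h
  have hnf : normA A f₀ ≠ 0 := fun h => hAf (aux19_Ax_eq_zero hA h)
  have hb : 0 < normA A f₀ := lt_of_le_of_ne (aux19_norm_nonneg f₀) (Ne.symm hnf)
  set b : ℝ := normA A f₀ with hbb
  set f : H := ((b : ℂ)⁻¹) • f₀ with hf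
  have hnf1 : normA A f = 1 := by
    rw [hf, aux19_normA_smul hA, norm_inv, Complex.norm_real, Real.norm_eq_abs, abs_of_pos hb, ← hbb,
      inv_mul_cancel₀ hnf]
  have hff : innA A f f = 1 := by
    rw [aux19_inner_self hA, hnf1]
    norm_num
  have hfe : innA A f e = 0 := by
    rw [hf, aux19_smul_left, hf0e, mul_zero]
  have hef : innA A e f = 0 := by
    rw [aux19_conj_symm hA, hfe, map_zero]
  clear_value a e c f₀ b f
  -- the pair
  have hq2 : 0 ≤ 1 - ‖q‖ ^ 2 := by nlinarith [norm_nonneg q]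
  set s : ℝ := Real.sqrt (1 - ‖q‖ ^ 2) with hs
  set y : H := (starRingEnd ℂ) q • e + (s : ℂ) • f with hy
  have hxy : innA A e y = q := by
    rw [hy, aux19_add_right, aux19_smul_right, aux19_smul_right, hee, hef,
      Complex.conj_conj, Complex.conj_ofReal, mul_one, mul_zero, add_zero]
  have hyy : innA A y y = 1 := by
    have hfy : innA A f y = (s : ℂ) := by
      rw [hy, aux19_add_right, aux19_smul_right, aux19_smul_right, hfe, hff,
        Complex.conj_ofReal, mul_zero, mul_one, zero_add]
    rw [hy, aux19_add_left, aux19_smul_left, aux19_smul_left, hxy, hfy]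
    rw [mul_comm ((starRingEnd ℂ) q) q, Complex.mul_conj, Complex.normSq_eq_norm_sq]
    have : (s : ℂ) * (s : ℂ) = ((s ^ 2 : ℝ) : ℂ) := by push_cast; ring
    rw [this, hs, Real.sq_sqrt hq2]
    push_cast
    ring
  have hny : normA A y = 1 := by
    have : normA A y = Real.sqrt ((innA A y y).re) := rfl
    rw [this, hyy]
    simp
  exact ⟨e, y, hne, hny, hxy⟩

lemma aux19_re_formula (t s : ℂ) :
    ((starRingEnd ℂ) t * s).re
      = (‖t + s‖ * ‖t + s‖
        - ‖t‖ * ‖t‖ - ‖s‖ * ‖s‖) / 2 := by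
  rw [Complex.norm_mul_self_eq_normSq, Complex.norm_mul_self_eq_normSq, Complex.norm_mul_self_eq_normSq, Complex.normSq_add]
  have h : ((starRingEnd ℂ) t * s).re = (t * (starRingEnd ℂ) s).re := by
    rw [← Complex.conj_re (t * (starRingEnd ℂ) s), map_mul, Complex.conj_conj]
  rw [h]
  ring

lemma aux19_normA_add (hA : A.IsPositive) (x y : H) :
    normA A (x + y) ≤ normA A x + normA A y := by
  have key : (⟪x + y, A (x + y)⟫_ℂ).re ≤ (normA A x + normA A y) ^ 2 := by
    have hexp : ⟪x + y, A (x + y)⟫_ℂ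
        = ⟪x, A x⟫_ℂ + ⟪x, A y⟫_ℂ + ⟪y, A x⟫_ℂ + ⟪y, A y⟫_ℂ := by
      rw [map_add, inner_add_left, inner_add_right, inner_add_right]
      ring
    have hc : ⟪x, A y⟫_ℂ = (starRingEnd ℂ) ⟪y, A x⟫_ℂ := by
      rw [← aux19_sw hA x y]
      exact (inner_conj_symm (A x) y).symm
    have h1 : (⟪y, A x⟫_ℂ).re ≤ ‖innA A x y‖ := Complex.re_le_norm _
    have h2 := aux19_cs hA x y
    have hx2 : (⟪x, A x⟫_ℂ).re = normA A x ^ 2 :=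
      (Real.sq_sqrt (hA.re_inner_nonneg_right x)).symm
    have hy2 : (⟪y, A y⟫_ℂ).re = normA A y ^ 2 :=
      (Real.sq_sqrt (hA.re_inner_nonneg_right y)).symm
    rw [hexp]
    simp only [Complex.add_re, hc, Complex.conj_re]
    nlinarith [h1, h2, hx2, hy2, aux19_norm_nonneg (A := A) x, aux19_norm_nonneg (A := A) y,
      norm_nonneg (innA A x y)]
  have h3 : Real.sqrt ((⟪x + y, A (x + y)⟫_ℂ).re)
      ≤ Real.sqrt ((normA A x + normA A y) ^ 2) := Real.sqrt_le_sqrt key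
  rw [Real.sqrt_sq (add_nonneg (aux19_norm_nonneg x) (aux19_norm_nonneg y))] at h3
  exact h3

lemma aux19_bdd (hA : A.IsPositive) {T : H →L[ℂ] H} {ξ : ℝ}
    (hb : ∀ x, normA A (T x) ≤ ξ * normA A x) (q : ℂ) :
    BddAbove {r | ∃ x y : H, normA A x = 1 ∧ normA A y = 1 ∧ innA A x y = q ∧
      r = ‖innA A (T x) y‖} := by
  refine ⟨ξ, ?_⟩
  rintro r ⟨x, y, hx, hy, hxy, rfl⟩
  calc ‖innA A (T x) y‖ ≤ normA A (T x) * normA A y := aux19_cs hA _ _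
    _ ≤ (ξ * normA A x) * normA A y :=
        mul_le_mul_of_nonneg_right (hb x) (aux19_norm_nonneg y)
    _ = ξ := by rw [hx, hy]; ring

lemma aux19_ne {T : H →L[ℂ] H} {q : ℂ} (x0 y0 : H) (h1 : normA A x0 = 1)
    (h2 : normA A y0 = 1) (h3 : innA A x0 y0 = q) :
    Set.Nonempty {r | ∃ x y : H, normA A x = 1 ∧ normA A y = 1 ∧ innA A x y = q ∧
      r = ‖innA A (T x) y‖} :=
  ⟨_, x0, y0, h1, h2, h3, rfl⟩


end aux

open Filter in
theorem stmt_19 [CompleteSpace H] (A : H →L[ℂ] H) (hA : A.IsPositive)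
    (hrank : 2 ≤ Module.rank ℂ (LinearMap.range (A : H →ₗ[ℂ] H)))
    (q : ℂ) (hq : ‖q‖ ≤ 1) (T S : H →L[ℂ] H)
    (hT : ∃ ξ > (0:ℝ), ∀ x : H, normA A (T x) ≤ ξ * normA A x)
    (hS : ∃ ξ > (0:ℝ), ∀ x : H, normA A (S x) ≤ ξ * normA A x) :
    wqA q A (T + S) = wqA q A T + wqA q A S ↔
      ∃ x y : ℕ → H,
        (∀ n, normA A (x n) = 1 ∧ normA A (y n) = 1 ∧ innA A (x n) (y n) = q) ∧
        Tendsto (fun n => (innA A (y n) (T (x n)) * innA A (S (x n)) (y n)).re) atTop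
          (nhds (wqA q A T * wqA q A S)) := by
  obtain ⟨x0, y0, h01, h02, h03⟩ := aux19_exists_pair hA hrank hq
  obtain ⟨ξT, hξT, hTb⟩ := hT
  obtain ⟨ξS, hξS, hSb⟩ := hS
  have hTSb : ∀ x : H, normA A ((T + S) x) ≤ (ξT + ξS) * normA A x := by
    intro x
    rw [ContinuousLinearMap.add_apply]
    calc normA A (T x + S x) ≤ normA A (T x) + normA A (S x) := aux19_normA_add hA _ _
      _ ≤ ξT * normA A x + ξS * normA A x := add_le_add (hTb x) (hSb x)
      _ = (ξT + ξS) * normA A x := by ring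
  -- basic facts about the three sets
  have bddT := aux19_bdd hA hTb q
  have bddS := aux19_bdd hA hSb q
  have bddTS := aux19_bdd hA hTSb q
  have neT := aux19_ne (T := T) x0 y0 h01 h02 h03
  have neS := aux19_ne (T := S) x0 y0 h01 h02 h03
  have neTS := aux19_ne (T := T + S) x0 y0 h01 h02 h03
  have memT : ∀ x' y' : H, normA A x' = 1 → normA A y' = 1 → innA A x' y' = q →
      ‖innA A (T x') y'‖ ≤ wqA q A T :=
    fun x' y' h1 h2 h3 => le_csSup bddT ⟨x', y', h1, h2, h3, rfl⟩
  have memS : ∀ x' y' : H, normA A x' = 1 → normA A y' = 1 → innA A x' y' = q →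
      ‖innA A (S x') y'‖ ≤ wqA q A S :=
    fun x' y' h1 h2 h3 => le_csSup bddS ⟨x', y', h1, h2, h3, rfl⟩
  have memTS : ∀ x' y' : H, normA A x' = 1 → normA A y' = 1 → innA A x' y' = q →
      ‖innA A ((T + S) x') y'‖ ≤ wqA q A (T + S) :=
    fun x' y' h1 h2 h3 => le_csSup bddTS ⟨x', y', h1, h2, h3, rfl⟩
  have hadd : ∀ x' y' : H, innA A ((T + S) x') y' = innA A (T x') y' + innA A (S x') y' := by
    intro x' y'
    rw [ContinuousLinearMap.add_apply, aux19_add_left]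
  have hwT0 : 0 ≤ wqA q A T :=
    le_trans (norm_nonneg _) (memT x0 y0 h01 h02 h03)
  have hwS0 : 0 ≤ wqA q A S :=
    le_trans (norm_nonneg _) (memS x0 y0 h01 h02 h03)
  have hsub : wqA q A (T + S) ≤ wqA q A T + wqA q A S := by
    apply csSup_le neTS
    rintro r ⟨x', y', h1, h2, h3, rfl⟩
    rw [hadd]
    calc ‖innA A (T x') y' + innA A (S x') y'‖
        ≤ ‖innA A (T x') y'‖ + ‖innA A (S x') y'‖ :=
          norm_add_le _ _
      _ ≤ wqA q A T + wqA q A S := add_le_add (memT _ _ h1 h2 h3) (memS _ _ h1 h2 h3)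
  constructor
  · -- forward direction
    intro heq
    obtain ⟨u, -, hu_t, hu_mem⟩ := exists_seq_tendsto_sSup neTS bddTS
    choose x y hx hy hxy hval using hu_mem
    refine ⟨x, y, fun n => ⟨hx n, hy n, hxy n⟩, ?_⟩
    have hu_t' : Tendsto u atTop (nhds (wqA q A T + wqA q A S)) := by
      rw [← heq]; exact hu_t
    have hsumn : ∀ n, u n = ‖innA A (T (x n)) (y n) + innA A (S (x n)) (y n)‖ := by
      intro n
      rw [hval n, hadd]
    have habT : Tendsto (fun n => ‖innA A (T (x n)) (y n)‖) atTop
        (nhds (wqA q A T)) := by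
      apply tendsto_of_tendsto_of_tendsto_of_le_of_le
        (g := fun n => u n - wqA q A S) (h := fun _ => wqA q A T)
      · have := hu_t'.sub (tendsto_const_nhds (x := wqA q A S))
        simpa using this
      · exact tendsto_const_nhds
      · intro n
        dsimp only
        have h1 : u n ≤ ‖innA A (T (x n)) (y n)‖ + wqA q A S := by
          rw [hsumn n]
          calc ‖innA A (T (x n)) (y n) + innA A (S (x n)) (y n)‖
              ≤ ‖innA A (T (x n)) (y n)‖ + ‖innA A (S (x n)) (y n)‖ :=
                norm_add_le _ _
            _ ≤ ‖innA A (T (x n)) (y n)‖ + wqA q A S := by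
                exact add_le_add_right (memS _ _ (hx n) (hy n) (hxy n)) _
        linarith
      · intro n
        exact memT _ _ (hx n) (hy n) (hxy n)
    have habS : Tendsto (fun n => ‖innA A (S (x n)) (y n)‖) atTop
        (nhds (wqA q A S)) := by
      apply tendsto_of_tendsto_of_tendsto_of_le_of_le
        (g := fun n => u n - wqA q A T) (h := fun _ => wqA q A S)
      · have := hu_t'.sub (tendsto_const_nhds (x := wqA q A T))
        have e : wqA q A T + wqA q A S - wqA q A T = wqA q A S := by ring
        rw [e] at this
        exact this
      · exact tendsto_const_nhds
      · intro n
        dsimp only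
        have h1 : u n ≤ ‖innA A (S (x n)) (y n)‖ + wqA q A T := by
          rw [hsumn n]
          calc ‖innA A (T (x n)) (y n) + innA A (S (x n)) (y n)‖
              ≤ ‖innA A (T (x n)) (y n)‖ + ‖innA A (S (x n)) (y n)‖ :=
                norm_add_le _ _
            _ ≤ wqA q A T + ‖innA A (S (x n)) (y n)‖ := by
                exact add_le_add_left (memT _ _ (hx n) (hy n) (hxy n)) _
            _ = ‖innA A (S (x n)) (y n)‖ + wqA q A T := by ring
        linarith
      · intro n
        exact memS _ _ (hx n) (hy n) (hxy n)
    have hmain : Tendsto (fun n => (u n * u n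
          - ‖innA A (T (x n)) (y n)‖ * ‖innA A (T (x n)) (y n)‖
          - ‖innA A (S (x n)) (y n)‖ * ‖innA A (S (x n)) (y n)‖) / 2)
        atTop (nhds (wqA q A T * wqA q A S)) := by
      have h2 := (((hu_t'.mul hu_t').sub (habT.mul habT)).sub (habS.mul habS)).div_const 2
      have e : ((wqA q A T + wqA q A S) * (wqA q A T + wqA q A S)
          - wqA q A T * wqA q A T - wqA q A S * wqA q A S) / 2 = wqA q A T * wqA q A S := by
        ring
      rw [e] at h2
      exact h2
    apply hmain.congr
    intro n
    rw [aux19_conj_symm hA (y n) (T (x n)), aux19_re_formula, ← hsumn n]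
  · -- converse direction
    rintro ⟨x, y, hP, hlim⟩
    have hlim' : Tendsto
        (fun n => ((starRingEnd ℂ) (innA A (T (x n)) (y n)) * innA A (S (x n)) (y n)).re)
        atTop (nhds (wqA q A T * wqA q A S)) := by
      apply hlim.congr
      intro n
      rw [aux19_conj_symm hA (y n) (T (x n))]
    refine le_antisymm hsub ?_
    rcases eq_or_lt_of_le hwT0 with hT0 | hTpos
    · -- wqA T = 0
      have hzero : ∀ x' y' : H, normA A x' = 1 → normA A y' = 1 → innA A x' y' = q →
          innA A (T x') y' = 0 := by
        intro x' y' h1 h2 h3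
        have := memT x' y' h1 h2 h3
        rw [← hT0] at this
        exact norm_eq_zero.mp (le_antisymm this (norm_nonneg _))
      rw [← hT0, zero_add]
      apply csSup_le neS
      rintro r ⟨x', y', h1, h2, h3, rfl⟩
      refine le_csSup bddTS ⟨x', y', h1, h2, h3, ?_⟩
      rw [hadd, hzero x' y' h1 h2 h3, zero_add]
    rcases eq_or_lt_of_le hwS0 with hS0 | hSpos
    · -- wqA S = 0
      have hzero : ∀ x' y' : H, normA A x' = 1 → normA A y' = 1 → innA A x' y' = q →
          innA A (S x') y' = 0 := by
        intro x' y' h1 h2 h3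
        have := memS x' y' h1 h2 h3
        rw [← hS0] at this
        exact norm_eq_zero.mp (le_antisymm this (norm_nonneg _))
      rw [← hS0, add_zero]
      apply csSup_le neT
      rintro r ⟨x', y', h1, h2, h3, rfl⟩
      refine le_csSup bddTS ⟨x', y', h1, h2, h3, ?_⟩
      rw [hadd, hzero x' y' h1 h2 h3, add_zero]
    -- both radii positive
    have habT : Tendsto (fun n => ‖innA A (T (x n)) (y n)‖) atTop
        (nhds (wqA q A T)) := by
      apply tendsto_of_tendsto_of_tendsto_of_le_of_le
        (g := fun n => ((starRingEnd ℂ) (innA A (T (x n)) (y n)) * innA A (S (x n)) (y n)).re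
          / wqA q A S)
        (h := fun _ => wqA q A T)
      · have h2 := hlim'.div_const (wqA q A S)
        rw [mul_div_assoc, div_self (ne_of_gt hSpos), mul_one] at h2
        exact h2
      · exact tendsto_const_nhds
      · intro n
        dsimp only
        rw [div_le_iff₀ hSpos]
        calc ((starRingEnd ℂ) (innA A (T (x n)) (y n)) * innA A (S (x n)) (y n)).re
            ≤ ‖(starRingEnd ℂ) (innA A (T (x n)) (y n)) * innA A (S (x n)) (y n)‖ :=
              Complex.re_le_norm _
          _ = ‖innA A (T (x n)) (y n)‖ * ‖innA A (S (x n)) (y n)‖ := by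
              rw [norm_mul, Complex.norm_conj]
          _ ≤ ‖innA A (T (x n)) (y n)‖ * wqA q A S := by
              exact mul_le_mul_of_nonneg_left
                (memS _ _ (hP n).1 (hP n).2.1 (hP n).2.2) (norm_nonneg _)
      · intro n
        exact memT _ _ (hP n).1 (hP n).2.1 (hP n).2.2
    have habS : Tendsto (fun n => ‖innA A (S (x n)) (y n)‖) atTop
        (nhds (wqA q A S)) := by
      apply tendsto_of_tendsto_of_tendsto_of_le_of_le
        (g := fun n => ((starRingEnd ℂ) (innA A (T (x n)) (y n)) * innA A (S (x n)) (y n)).re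
          / wqA q A T)
        (h := fun _ => wqA q A S)
      · have h2 := hlim'.div_const (wqA q A T)
        rw [mul_comm, mul_div_assoc, div_self (ne_of_gt hTpos), mul_one] at h2
        exact h2
      · exact tendsto_const_nhds
      · intro n
        dsimp only
        rw [div_le_iff₀ hTpos]
        calc ((starRingEnd ℂ) (innA A (T (x n)) (y n)) * innA A (S (x n)) (y n)).re
            ≤ ‖(starRingEnd ℂ) (innA A (T (x n)) (y n)) * innA A (S (x n)) (y n)‖ :=
              Complex.re_le_norm _
          _ = ‖innA A (T (x n)) (y n)‖ * ‖innA A (S (x n)) (y n)‖ := by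
              rw [norm_mul, Complex.norm_conj]
          _ ≤ wqA q A T * ‖innA A (S (x n)) (y n)‖ := by
              exact mul_le_mul_of_nonneg_right
                (memT _ _ (hP n).1 (hP n).2.1 (hP n).2.2) (norm_nonneg _)
          _ = ‖innA A (S (x n)) (y n)‖ * wqA q A T := by ring
      · intro n
        exact memS _ _ (hP n).1 (hP n).2.1 (hP n).2.2
    have hsq : Tendsto (fun n => ‖innA A (T (x n)) (y n) + innA A (S (x n)) (y n)‖
          * ‖innA A (T (x n)) (y n) + innA A (S (x n)) (y n)‖) atTop
        (nhds ((wqA q A T + wqA q A S) * (wqA q A T + wqA q A S))) := by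
      have h2 := ((habT.mul habT).add (habS.mul habS)).add (hlim'.const_mul 2)
      have e : wqA q A T * wqA q A T + wqA q A S * wqA q A S + 2 * (wqA q A T * wqA q A S)
          = (wqA q A T + wqA q A S) * (wqA q A T + wqA q A S) := by ring
      rw [e] at h2
      apply h2.congr
      intro n
      have h3 := aux19_re_formula (innA A (T (x n)) (y n)) (innA A (S (x n)) (y n))
      linarith [h3]
    have habTS : Tendsto (fun n => ‖innA A (T (x n)) (y n) + innA A (S (x n)) (y n)‖)
        atTop (nhds (wqA q A T + wqA q A S)) := by
      have h2 := (Real.continuous_sqrt.tendsto _).comp hsq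
      have e : Real.sqrt ((wqA q A T + wqA q A S) * (wqA q A T + wqA q A S))
          = wqA q A T + wqA q A S := Real.sqrt_mul_self (by linarith)
      rw [e] at h2
      apply h2.congr
      intro n
      exact Real.sqrt_mul_self (norm_nonneg _)
    apply le_of_tendsto habTS
    apply Filter.Eventually.of_forall
    intro n
    rw [← hadd]
    exact memTS _ _ (hP n).1 (hP n).2.1 (hP n).2.2
end
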